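/- Let d ≥ 3 be an integer and p an odd prime. Then there exists a constant C₀ > 0 such that for every natural number n ≥ 1, the quantity p^{d−2} · δ_{p,d}(p²n) − δ_{p,d}(n) is a real number and p^{d−2} · δ_{p,d}(p²n) − δ_{p,d}(n) ≥ C₀. -/

import Mathlib

open Complex Real Finset

/-- The Gauss sum `S(q,a) = Σ_{t=1}^{q} e^{2πi a t²/q}`. -/
noncomputable def gaussSumS (q : ℕ) (a : ℕ) : ℂ :=
  ∑ t ∈ Finset.Icc 1 q, Complex.exp (2 * π * I * (a : ℂ) * (t : ℂ) ^ 2 / (q : ℂ))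

/-- `A_d(q,n) = Σ_{1 ≤ a ≤ q, gcd(a,q)=1} (q⁻¹ S(q,a))^d e^{-2πi n a/q}`;
note `A_d(1,n) = 1`. -/
noncomputable def Acoef (d q n : ℕ) : ℂ :=
  ∑ a ∈ (Finset.Icc 1 q).filter fun a => Nat.gcd a q = 1,
    ((q : ℂ)⁻¹ * gaussSumS q a) ^ d * Complex.exp (-(2 * π * I) * (n : ℂ) * (a : ℂ) / (q : ℂ))

/-- The `p`-adic local density `δ_{p,d}(n) = Σ_{h=0}^∞ A_d(p^h, n)` (for odd `p`
only finitely many terms are nonzero). -/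
noncomputable def localDensity (p d n : ℕ) : ℂ := ∑' h : ℕ, Acoef d (p ^ h) n

namespace LDAux

/-- `e^{2πi m/q}`. -/
noncomputable def eZ (q : ℕ) (m : ℤ) : ℂ := Complex.exp (2 * π * I * m / q)

lemma eZ_add (q : ℕ) (m m' : ℤ) : eZ q (m + m') = eZ q m * eZ q m' := by
  rw [eZ, eZ, eZ, ← Complex.exp_add]
  rcases eq_or_ne (q : ℂ) 0 with hq | hq
  · simp [hq]
  · congr 1; push_cast; ring

lemma eZ_zero (q : ℕ) : eZ q 0 = 1 := by simp [eZ]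

lemma eZ_eq_one (q : ℕ) {m : ℤ} (h : (q : ℤ) ∣ m) : eZ q m = 1 := by
  obtain ⟨k, rfl⟩ := h
  rcases eq_or_ne q 0 with hq | hq
  · subst hq; simp [eZ]
  · have hq' : (q : ℂ) ≠ 0 := by exact_mod_cast hq
    rw [eZ, show 2 * (π:ℂ) * I * ((q : ℤ) * k : ℤ) / q = (k : ℂ) * (2 * π * I) by
      push_cast; field_simp]
    exact Complex.exp_int_mul_two_pi_mul_I k

lemma eZ_congr (q : ℕ) {m m' : ℤ} (h : (q : ℤ) ∣ (m - m')) : eZ q m = eZ q m' := by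
  have hm : m = m' + (m - m') := by ring
  rw [hm, eZ_add, eZ_eq_one q h, mul_one]

lemma eZ_pow (q : ℕ) (m : ℤ) (t : ℕ) : eZ q (m * t) = eZ q m ^ t := by
  induction t with
  | zero => simp [eZ]
  | succ k ih =>
      have : m * ((k:ℕ)+1 : ℤ) = m * k + m := by ring
      rw [show ((k+1 : ℕ) : ℤ) = ((k:ℕ) : ℤ) + 1 by push_cast; ring, this, eZ_add, ih, pow_succ]

lemma eZ_eq_one_iff (q : ℕ) (hq : q ≠ 0) (m : ℤ) : eZ q m = 1 ↔ (q : ℤ) ∣ m := by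
  constructor
  · intro h
    rw [eZ, Complex.exp_eq_one_iff] at h
    obtain ⟨k, hk⟩ := h
    have hq' : (q : ℂ) ≠ 0 := by exact_mod_cast hq
    have h2 : (2 * (π:ℂ) * I) ≠ 0 := by
      simp [Real.pi_ne_zero, Complex.I_ne_zero, Complex.ofReal_ne_zero]
    have h3 : (2 * (π:ℂ) * I) * m = (2 * (π:ℂ) * I) * (k * q) := by
      field_simp at hk; rw [hk]; ring
    have h4 : (m : ℂ) = k * q := mul_left_cancel₀ h2 h3
    have h5 : m = k * q := by exact_mod_cast h4
    exact ⟨k, by rw [h5]; ring⟩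
  · exact eZ_eq_one q

lemma eZ_shift (q r : ℕ) (hr : r ≠ 0) (m : ℤ) : eZ (q * r) (r * m) = eZ q m := by
  rcases eq_or_ne q 0 with hq | hq
  · subst hq; simp [eZ]
  · have hq' : (q : ℂ) ≠ 0 := by exact_mod_cast hq
    have hr' : (r : ℂ) ≠ 0 := by exact_mod_cast hr
    rw [eZ, eZ]; congr 1; push_cast; field_simp

lemma sum_eZ_mul (q : ℕ) (hq : q ≠ 0) (m : ℤ) :
    ∑ t ∈ range q, eZ q (m * t) = if (q : ℤ) ∣ m then (q : ℂ) else 0 := by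
  split_ifs with h
  · have h1 : ∀ t ∈ range q, eZ q (m * (t:ℤ)) = 1 := fun t _ => eZ_eq_one q (h.mul_right _)
    refine (Finset.sum_congr rfl h1).trans ?_
    simp
  · have hz : eZ q m ≠ 1 := fun hh => h ((eZ_eq_one_iff q hq m).mp hh)
    calc ∑ t ∈ range q, eZ q (m * t) = ∑ t ∈ range q, (eZ q m) ^ t :=
          Finset.sum_congr rfl fun t _ => eZ_pow q m t
      _ = ((eZ q m) ^ q - 1) / (eZ q m - 1) := geom_sum_eq hz q
      _ = 0 := by
          rw [← eZ_pow, eZ_eq_one q ⟨m, by ring⟩]; simp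

/-- `eZ` as a function on `ZMod q`. -/
noncomputable def ec (q : ℕ) (x : ZMod q) : ℂ := eZ q x.val

lemma ec_eq (q : ℕ) (hq : q ≠ 0) {m : ℤ} {x : ZMod q} (h : (m : ZMod q) = x) :
    ec q x = eZ q m := by
  haveI : NeZero q := ⟨hq⟩
  refine eZ_congr q ?_
  rw [← ZMod.intCast_zmod_eq_zero_iff_dvd]
  push_cast
  rw [ZMod.natCast_zmod_val, h, sub_self]

lemma ec_natCast (q : ℕ) (hq : q ≠ 0) (m : ℕ) : ec q ((m : ℕ) : ZMod q) = eZ q m :=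
  ec_eq q hq (by push_cast; rfl)

lemma ec_add (q : ℕ) (hq : q ≠ 0) (x y : ZMod q) : ec q (x + y) = ec q x * ec q y := by
  haveI : NeZero q := ⟨hq⟩
  have h1 : ec q (x + y) = eZ q ((x.val : ℤ) + (y.val : ℤ)) := by
    refine ec_eq q hq ?_
    push_cast
    rw [ZMod.natCast_zmod_val, ZMod.natCast_zmod_val]
  rw [h1, eZ_add]; rfl

lemma ec_zero (q : ℕ) (hq : q ≠ 0) : ec q 0 = 1 := by
  haveI : NeZero q := ⟨hq⟩
  rw [ec, ZMod.val_zero]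
  exact eZ_zero q

lemma conj_eZ (q : ℕ) (m : ℤ) : (starRingEnd ℂ) (eZ q m) = eZ q (-m) := by
  rw [eZ, eZ, ← Complex.exp_conj]
  congr 1
  simp only [map_div₀, map_mul, Complex.conj_I, map_ofNat, Complex.conj_ofReal, map_intCast,
    map_natCast]
  push_cast
  ring

lemma conj_ec (q : ℕ) (hq : q ≠ 0) (x : ZMod q) : (starRingEnd ℂ) (ec q x) = ec q (-x) := by
  haveI : NeZero q := ⟨hq⟩
  rw [ec, conj_eZ]
  exact (ec_eq q hq (by push_cast; rw [ZMod.natCast_zmod_val])).symm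

lemma sum_zmod (q : ℕ) [NeZero q] (F : ZMod q → ℂ) :
    ∑ x : ZMod q, F x = ∑ t ∈ range q, F (t : ZMod q) := by
  refine Finset.sum_nbij' (fun x => x.val) (fun t => (t : ZMod q)) ?_ ?_ ?_ ?_ ?_
  · intro x _; exact mem_range.mpr (ZMod.val_lt x)
  · intro t _; exact mem_univ _
  · intro x _; exact ZMod.natCast_zmod_val x
  · intro t ht; exact ZMod.val_cast_of_lt (mem_range.mp ht)
  · intro x _; rw [ZMod.natCast_zmod_val]

lemma sum_ec (q : ℕ) [NeZero q] (hq : 2 ≤ q) : ∑ x : ZMod q, ec q x = 0 := by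
  have hq0 : q ≠ 0 := by omega
  rw [sum_zmod q]
  have h1 : ∀ t ∈ range q, ec q ((t : ℕ) : ZMod q) = eZ q ((1:ℤ) * t) := by
    intro t _; rw [ec_natCast q hq0, one_mul]
  rw [Finset.sum_congr rfl h1, sum_eZ_mul q hq0 1]
  have : ¬ ((q:ℤ) ∣ 1) := by
    intro h; have := Int.le_of_dvd one_pos h; omega
  simp [this]

lemma sum_ec_mul (p : ℕ) [NeZero p] (hp : p.Prime) (c : ZMod p) :
    ∑ x : ZMod p, ec p (c * x) = if c = 0 then (p : ℂ) else 0 := by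
  haveI := Fact.mk hp
  have hp0 : p ≠ 0 := hp.pos.ne'
  split_ifs with h
  · subst h
    have h1 : ∀ x : ZMod p, ec p ((0 : ZMod p) * x) = 1 := fun x => by
      rw [zero_mul, ec_zero p hp0]
    rw [Finset.sum_congr rfl (fun x _ => h1 x)]
    simp [ZMod.card]
  · have h2 : ∑ x : ZMod p, ec p (c * x) = ∑ x : ZMod p, ec p x := by
      have := Equiv.sum_comp (Equiv.mulLeft₀ c h) (fun x => ec p x)
      simpa using this
    rw [h2, sum_ec p hp.two_le]

lemma gaussSumS_range (q : ℕ) (hq : q ≠ 0) (a : ℕ) :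
    gaussSumS q a = ∑ t ∈ range q, eZ q ((a : ℤ) * (t:ℤ) ^ 2) := by
  have h1 : Finset.Icc 1 q = insert q (Finset.Ico 1 q) := by
    ext x; simp [Finset.mem_Icc, Finset.mem_Ico, Finset.mem_insert]; omega
  have h2 : range q = insert 0 (Finset.Ico 1 q) := by
    ext x; simp [Finset.mem_range, Finset.mem_Ico, Finset.mem_insert]; omega
  rw [gaussSumS, h1, h2, Finset.sum_insert (by simp), Finset.sum_insert (by simp)]
  have h3 : ∀ t ∈ Finset.Ico 1 q,
      Complex.exp (2 * π * I * (a : ℂ) * (t : ℂ) ^ 2 / (q : ℂ)) = eZ q ((a:ℤ) * (t:ℤ)^2) := by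
    intro t _; rw [eZ]; congr 1; push_cast; ring
  rw [Finset.sum_congr rfl h3]
  congr 1
  have h4 : eZ q ((a:ℤ) * ((0:ℕ):ℤ)^2) = 1 := by
    norm_num; exact eZ_zero q
  rw [h4]
  have h5 : (2 * π * I * (a : ℂ) * (q : ℂ) ^ 2 / (q : ℂ)) = 2 * π * I * ((a*q^2 : ℤ):ℂ) / q := by
    push_cast; ring
  show Complex.exp _ = 1
  rw [h5]
  exact eZ_eq_one q ⟨a * q, by push_cast; ring⟩

lemma gaussSumS_zmod (q : ℕ) [NeZero q] (a : ℕ) :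
    gaussSumS q a = ∑ x : ZMod q, ec q ((a : ZMod q) * x ^ 2) := by
  have hq : q ≠ 0 := NeZero.ne q
  rw [gaussSumS_range q hq a, sum_zmod q]
  refine Finset.sum_congr rfl fun t _ => ?_
  exact (ec_eq q hq (by push_cast; ring)).symm

lemma gaussSumS_congr (q : ℕ) (hq : q ≠ 0) {a b : ℕ} (h : (a : ZMod q) = (b : ZMod q)) :
    gaussSumS q a = gaussSumS q b := by
  haveI : NeZero q := ⟨hq⟩
  rw [gaussSumS_zmod q a, gaussSumS_zmod q b, h]

lemma gaussSumS_one_mod (a : ℕ) : gaussSumS 1 a = 1 := by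
  rw [gaussSumS, show Finset.Icc 1 1 = {1} from rfl, Finset.sum_singleton]
  have h : (2 * (π:ℂ) * I * (a : ℂ) * ((1:ℕ) : ℂ) ^ 2 / ((1:ℕ) : ℂ)) = ((a:ℤ):ℂ) * (2 * π * I) := by
    push_cast; ring
  rw [h]
  exact Complex.exp_int_mul_two_pi_mul_I a

lemma gaussSumS_zero_arg (p : ℕ) (hp0 : p ≠ 0) : gaussSumS p 0 = p := by
  rw [gaussSumS_range p hp0]
  have h1 : ∀ t ∈ range p, eZ p (((0:ℕ):ℤ) * (t:ℤ)^2) = 1 := by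
    intro t _; norm_num; exact eZ_zero p
  rw [Finset.sum_congr rfl h1]
  simp

lemma sum_range_mul (M K : ℕ) (f : ℕ → ℂ) :
    ∑ a ∈ range (M * K), f a = ∑ c ∈ range K, ∑ b ∈ range M, f (b + M * c) := by
  induction K with
  | zero => simp
  | succ k ih =>
    rw [Nat.mul_succ, Finset.sum_range_add, ih, Finset.sum_range_succ]
    congr 1
    refine Finset.sum_congr rfl fun b _ => ?_
    congr 1
    omega

lemma sum_range_mul_filter (p M K : ℕ) (hM : p ∣ M) (f : ℕ → ℂ) :
    ∑ a ∈ (range (M * K)).filter (fun a => ¬ p ∣ a), f a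
      = ∑ c ∈ range K, ∑ b ∈ (range M).filter (fun b => ¬ p ∣ b), f (b + M * c) := by
  rw [Finset.sum_filter, sum_range_mul M K]
  refine Finset.sum_congr rfl fun c _ => ?_
  rw [Finset.sum_filter]
  refine Finset.sum_congr rfl fun b _ => ?_
  have hiff : (p ∣ b + M * c) ↔ p ∣ b := by
    have h2 : p ∣ M * c := hM.mul_right c
    constructor
    · intro h; have := Nat.dvd_sub h h2; simpa using this
    · intro h; exact Nat.dvd_add h h2
  simp only [hiff]

lemma sum_range_mul_dvd (p K : ℕ) (hp : 0 < p) (f : ℕ → ℂ) :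
    ∑ a ∈ (range (p * K)).filter (fun a => p ∣ a), f a = ∑ w ∈ range K, f (p * w) := by
  rw [Finset.sum_filter, sum_range_mul p K]
  refine Finset.sum_congr rfl fun c _ => ?_
  rw [Finset.sum_eq_single 0]
  · simp
  · intro b hb hb0
    have hblt : b < p := mem_range.mp hb
    have : ¬ p ∣ b + p * c := by
      intro h
      have h2 : p ∣ b := by
        have := Nat.dvd_sub h (Dvd.intro c rfl)
        simpa using this
      rcases h2 with ⟨e, rfl⟩
      rcases Nat.eq_zero_or_pos e with rfl | he
      · simp at hb0
      · nlinarith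
    simp [this]
  · intro h
    exact absurd (mem_range.mpr hp) h

lemma p_ne_two (p : ℕ) (hp : p.Prime) (hodd : Odd p) : p ≠ 2 := by
  intro h; subst h; exact (Nat.not_odd_iff_even.mpr (by decide)) hodd

/-- The recursion `S(p^{h+2}, a) = p · S(p^h, a)` for `p` an odd prime and `p ∤ a`. -/
lemma gauss_step (p : ℕ) (hp : p.Prime) (hodd : Odd p) (h : ℕ) (a : ℕ) (ha : ¬ p ∣ a) :
    gaussSumS (p ^ (h + 2)) a = p * gaussSumS (p ^ h) a := by
  have hp0 : p ≠ 0 := hp.pos.ne'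
  have hq2 : (p:ℕ) ^ (h + 2) ≠ 0 := pow_ne_zero _ hp0
  have hqh : (p:ℕ) ^ h ≠ 0 := pow_ne_zero _ hp0
  rw [gaussSumS_range _ hq2 a, gaussSumS_range _ hqh a]
  have hsplit : (p:ℕ) ^ (h + 2) = p ^ (h + 1) * p := by ring
  calc ∑ t ∈ range (p ^ (h+2)), eZ (p^(h+2)) ((a:ℤ) * (t:ℤ)^2)
      = ∑ t ∈ range (p^(h+1) * p), eZ (p^(h+2)) ((a:ℤ) * (t:ℤ)^2) := by rw [← hsplit]
    _ = ∑ s ∈ range p, ∑ u ∈ range (p^(h+1)), eZ (p^(h+2)) ((a:ℤ) * ((u + p^(h+1) * s : ℕ):ℤ)^2) :=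
        sum_range_mul (p^(h+1)) p _
    _ = ∑ s ∈ range p, ∑ u ∈ range (p^(h+1)),
          eZ (p^(h+2)) ((a:ℤ) * (u:ℤ)^2) * eZ p ((2 * (a:ℤ) * u) * (s:ℤ)) := by
        refine Finset.sum_congr rfl fun s _ => Finset.sum_congr rfl fun u _ => ?_
        have e1 : (a:ℤ) * ((u + p^(h+1) * s : ℕ):ℤ)^2
            = (a:ℤ) * (u:ℤ)^2 + ((p:ℤ)^(h+1)) * ((2 * a * u) * s)
              + ((p:ℤ)^(h+2)) * (a * (p:ℤ)^h * s^2) := by push_cast; ring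
        rw [e1, eZ_add, eZ_add]
        have e2 : eZ (p^(h+2)) (((p:ℤ)^(h+2)) * ((a:ℤ) * (p:ℤ)^h * (s:ℤ)^2)) = 1 :=
          eZ_eq_one _ ⟨(a:ℤ) * (p:ℤ)^h * (s:ℤ)^2, by push_cast; ring⟩
        rw [e2, mul_one]
        congr 1
        have e3 : eZ (p^(h+2)) (((p:ℤ)^(h+1)) * ((2 * (a:ℤ) * u) * s))
            = eZ (p * p^(h+1)) (((p:ℤ)^(h+1)) * ((2 * (a:ℤ) * u) * s)) := by
          congr 1; ring
        rw [e3, show ((p:ℤ)^(h+1)) = (((p^(h+1) : ℕ)):ℤ) by push_cast; ring]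
        exact eZ_shift p (p^(h+1)) (pow_ne_zero _ hp0) _
    _ = ∑ u ∈ range (p^(h+1)), ∑ s ∈ range p,
          eZ (p^(h+2)) ((a:ℤ) * (u:ℤ)^2) * eZ p ((2 * (a:ℤ) * u) * (s:ℤ)) := Finset.sum_comm
    _ = ∑ u ∈ range (p^(h+1)), eZ (p^(h+2)) ((a:ℤ) * (u:ℤ)^2)
          * (if (p:ℤ) ∣ (2 * (a:ℤ) * u) then (p:ℂ) else 0) := by
        refine Finset.sum_congr rfl fun u _ => ?_
        rw [← Finset.mul_sum, sum_eZ_mul p hp0]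
    _ = ∑ u ∈ range (p^(h+1)), (if p ∣ u then (p:ℂ) else 0) * eZ (p^(h+2)) ((a:ℤ) * (u:ℤ)^2) := by
        refine Finset.sum_congr rfl fun u _ => ?_
        have hiff : ((p:ℤ) ∣ (2 * (a:ℤ) * u)) ↔ p ∣ u := by
          rw [show (2 * (a:ℤ) * u) = ((2 * a * u : ℕ) : ℤ) by push_cast; ring,
            Int.natCast_dvd_natCast]
          constructor
          · intro hd
            rcases (Nat.Prime.dvd_mul hp).mp hd with hd2 | hdu
            · rcases (Nat.Prime.dvd_mul hp).mp hd2 with h2 | hA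
              · exact absurd ((Nat.prime_dvd_prime_iff_eq hp Nat.prime_two).mp h2)
                  (p_ne_two p hp hodd)
              · exact absurd hA ha
            · exact hdu
          · intro hu; exact Dvd.dvd.mul_left hu _
        simp only [hiff]
        split_ifs <;> ring
    _ = ∑ a_1 ∈ (range (p^(h+1))).filter (fun u => p ∣ u),
          (p:ℂ) * eZ (p^(h+2)) ((a:ℤ) * (a_1:ℤ)^2) := by
        rw [Finset.sum_filter]
        refine Finset.sum_congr rfl fun u _ => ?_
        split_ifs <;> simp
    _ = ∑ w ∈ range (p^h), (p:ℂ) * eZ (p^(h+2)) ((a:ℤ) * ((p * w : ℕ):ℤ)^2) := by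
        rw [show (p:ℕ)^(h+1) = p * p^h by ring]
        exact sum_range_mul_dvd p (p^h) hp.pos _
    _ = (p:ℂ) * ∑ w ∈ range (p^h), eZ (p^h) ((a:ℤ) * (w:ℤ)^2) := by
        rw [Finset.mul_sum]
        refine Finset.sum_congr rfl fun w _ => ?_
        congr 1
        have e1 : (a:ℤ) * ((p * w : ℕ):ℤ)^2 = (((p^2 : ℕ)):ℤ) * ((a:ℤ) * (w:ℤ)^2) := by
          push_cast; ring
        have e2 : eZ (p^(h+2)) ((a:ℤ) * ((p * w : ℕ):ℤ)^2)
            = eZ (p^h * p^2) ((((p^2:ℕ)):ℤ) * ((a:ℤ) * (w:ℤ)^2)) := by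
          rw [e1]; congr 1; ring
        rw [e2]
        exact eZ_shift (p^h) (p^2) (pow_ne_zero _ hp0) _

lemma gauss_eval_even (p : ℕ) (hp : p.Prime) (hodd : Odd p) (k a : ℕ) (ha : ¬ p ∣ a) :
    gaussSumS (p ^ (2 * k)) a = (p : ℂ) ^ k := by
  induction k with
  | zero => simpa using gaussSumS_one_mod a
  | succ j ih =>
      have : 2 * (j + 1) = 2 * j + 2 := by ring
      rw [this, gauss_step p hp hodd (2 * j) a ha, ih, pow_succ]
      ring

lemma gauss_eval_odd (p : ℕ) (hp : p.Prime) (hodd : Odd p) (k a : ℕ) (ha : ¬ p ∣ a) :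
    gaussSumS (p ^ (2 * k + 1)) a = (p : ℂ) ^ k * gaussSumS p a := by
  induction k with
  | zero => simp
  | succ j ih =>
      have : 2 * (j + 1) + 1 = (2 * j + 1) + 2 := by ring
      rw [this, gauss_step p hp hodd (2 * j + 1) a ha, ih, pow_succ]
      ring

lemma gcd_pow_iff (p : ℕ) (hp : p.Prime) (h : ℕ) (hh : 1 ≤ h) (a : ℕ) :
    Nat.gcd a (p ^ h) = 1 ↔ ¬ p ∣ a := by
  have h1 : Nat.gcd a (p ^ h) = 1 ↔ Nat.Coprime a (p ^ h) := Iff.rfl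
  rw [h1, Nat.coprime_pow_right_iff (by omega), Nat.coprime_comm]
  exact hp.coprime_iff_not_dvd

lemma Acoef_range (d q n : ℕ) (hq : 2 ≤ q) :
    Acoef d q n = ∑ a ∈ (range q).filter (fun a => Nat.gcd a q = 1),
      ((q : ℂ)⁻¹ * gaussSumS q a) ^ d * eZ q (-((n : ℤ) * a)) := by
  rw [Acoef]
  have hset : (Finset.Icc 1 q).filter (fun a => Nat.gcd a q = 1)
      = (range q).filter (fun a => Nat.gcd a q = 1) := by
    ext x
    simp only [Finset.mem_filter, Finset.mem_Icc, Finset.mem_range]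
    constructor
    · rintro ⟨⟨h1, h2⟩, h3⟩
      refine ⟨lt_of_le_of_ne h2 (fun e => ?_), h3⟩
      subst e; rw [Nat.gcd_self] at h3; omega
    · rintro ⟨h1, h3⟩
      refine ⟨⟨?_, h1.le⟩, h3⟩
      rcases Nat.eq_zero_or_pos x with rfl | hx
      · rw [Nat.gcd_zero_left] at h3; omega
      · exact hx
  rw [hset]
  refine Finset.sum_congr rfl fun a _ => ?_
  congr 1
  rw [eZ]
  congr 1
  push_cast
  ring

lemma Acoef_one_mod (d n : ℕ) : Acoef d 1 n = 1 := by
  rw [Acoef]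
  have hset : (Finset.Icc 1 1).filter (fun a => Nat.gcd a 1 = 1) = {1} := by decide
  rw [hset, Finset.sum_singleton, gaussSumS_one_mod]
  have h2 : Complex.exp (-(2 * (π:ℂ) * I) * (n : ℂ) * ((1:ℕ) : ℂ) / ((1:ℕ) : ℂ)) = 1 := by
    rw [show (-(2 * (π:ℂ) * I) * (n : ℂ) * ((1:ℕ) : ℂ) / ((1:ℕ) : ℂ))
        = ((-(n:ℤ) : ℤ) : ℂ) * (2 * π * I) from by push_cast; ring]
    exact Complex.exp_int_mul_two_pi_mul_I _
  rw [h2]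
  norm_num

lemma Acoef_pow (d p n h : ℕ) (hp : p.Prime) (hh : 1 ≤ h) :
    Acoef d (p ^ h) n = ∑ a ∈ (range (p ^ h)).filter (fun a => ¬ p ∣ a),
      (((p ^ h : ℕ) : ℂ)⁻¹ * gaussSumS (p ^ h) a) ^ d * eZ (p ^ h) (-((n : ℤ) * a)) := by
  have hq2 : 2 ≤ p ^ h := le_trans hp.two_le (Nat.le_self_pow (by omega) p)
  rw [Acoef_range d (p ^ h) n hq2]
  refine Finset.sum_congr ?_ fun a _ => rfl
  apply Finset.filter_congr
  intro x _
  simp only [gcd_pow_iff p hp h hh x]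

lemma Acoef_vanish (d p n h : ℕ) (hp : p.Prime) (hodd : Odd p) (hn : n ≠ 0)
    [hfact : Fact p.Prime]
    (h2 : 2 ≤ h) (hv : padicValNat p n + 2 ≤ h) : Acoef d (p ^ h) n = 0 := by
  obtain ⟨k, rfl⟩ : ∃ k, h = k + 2 := ⟨h - 2, by omega⟩
  have hp0 : p ≠ 0 := hp.pos.ne'
  rw [Acoef_pow d p n (k + 2) hp (by omega)]
  rw [show (p:ℕ)^(k+2) = p * p^(k+1) by ring]
  have hGB : ∀ b c : ℕ, ¬ p ∣ b →
      gaussSumS (p * p^(k+1)) (b + p * c) = gaussSumS (p * p^(k+1)) b := by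
    intro b c hb
    rw [show (p:ℕ) * p^(k+1) = p^(k+2) by ring]
    have hbc : ¬ p ∣ (b + p * c) := by
      intro hd
      exact hb (by have := Nat.dvd_sub hd (Dvd.intro c rfl); simpa using this)
    rcases Nat.even_or_odd (k+2) with he | ho
    · obtain ⟨j, hj⟩ := he
      rw [show k + 2 = 2 * j by omega, gauss_eval_even p hp hodd j _ hbc,
        gauss_eval_even p hp hodd j b hb]
    · obtain ⟨j, hj⟩ := ho
      rw [show k + 2 = 2 * j + 1 by omega, gauss_eval_odd p hp hodd j _ hbc,
        gauss_eval_odd p hp hodd j b hb]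
      congr 1
      refine gaussSumS_congr p hp0 ?_
      rw [Nat.cast_add, Nat.cast_mul, ZMod.natCast_self, zero_mul, add_zero]
  rw [sum_range_mul_filter p p (p^(k+1)) dvd_rfl]
  have step1 : ∀ c ∈ range (p^(k+1)),
      (∑ b ∈ (range p).filter (fun b => ¬ p ∣ b),
        ((↑(p * p^(k+1)):ℂ)⁻¹ * gaussSumS (p * p^(k+1)) (b + p * c))^d
          * eZ (p * p^(k+1)) (-((n:ℤ) * ((b + p * c : ℕ):ℤ))))
      = (∑ b ∈ (range p).filter (fun b => ¬ p ∣ b),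
        ((↑(p * p^(k+1)):ℂ)⁻¹ * gaussSumS (p * p^(k+1)) b)^d
          * eZ (p * p^(k+1)) (-((n:ℤ) * b))) * eZ (p^(k+1)) ((-(n:ℤ)) * c) := by
    intro c _
    rw [Finset.sum_mul]
    refine Finset.sum_congr rfl fun b hb => ?_
    obtain ⟨hbr, hbd⟩ := Finset.mem_filter.mp hb
    rw [hGB b c hbd]
    have hE : (-((n:ℤ) * ((b + p * c : ℕ):ℤ)))
        = (-((n:ℤ) * b)) + (p:ℤ) * ((-(n:ℤ)) * c) := by push_cast; ring
    rw [hE, eZ_add]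
    have hshift : eZ (p * p^(k+1)) ((p:ℤ) * ((-(n:ℤ)) * c)) = eZ (p^(k+1)) ((-(n:ℤ)) * c) := by
      rw [show (p:ℕ) * p^(k+1) = p^(k+1) * p from mul_comm _ _]
      exact eZ_shift (p^(k+1)) p hp0 _
    rw [hshift]
    ring
  refine Eq.trans (Finset.sum_congr rfl step1) ?_
  have hnd : ¬ ((↑(p^(k+1)) : ℤ) ∣ (-(n:ℤ))) := by
    rw [Int.dvd_neg, Int.natCast_dvd_natCast]
    intro hdvd
    have := (padicValNat_dvd_iff_le hn).mp hdvd
    omega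
  have horth : ∑ c ∈ range (p^(k+1)), eZ (p^(k+1)) ((-(n:ℤ)) * (c:ℤ)) = 0 := by
    rw [sum_eZ_mul (p^(k+1)) (pow_ne_zero _ hp0) (-(n:ℤ)), if_neg hnd]
  rw [← Finset.mul_sum, horth, mul_zero]

lemma Acoef_scale (d p n h : ℕ) (hp : p.Prime) (hodd : Odd p) (hh : 1 ≤ h) :
    Acoef d (p^(h+2)) (p^2 * n) * ((p:ℂ))^d = Acoef d (p^h) n * (p:ℂ)^2 := by
  have hp0 : p ≠ 0 := hp.pos.ne'
  have hph0 : ((p:ℕ)^h : ℕ) ≠ 0 := pow_ne_zero _ hp0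
  rw [Acoef_pow d p (p^2*n) (h+2) hp (by omega), Acoef_pow d p n h hp hh]
  rw [show (p:ℕ)^(h+2) = p^h * p^2 by ring]
  rw [sum_range_mul_filter p (p^h) (p^2) (dvd_pow_self p (by omega))]
  have step1 : ∀ c ∈ range (p^2),
      (∑ b ∈ (range (p^h)).filter (fun b => ¬ p ∣ b),
        ((↑(p^h * p^2):ℂ)⁻¹ * gaussSumS (p^h * p^2) (b + p^h * c))^d
          * eZ (p^h * p^2) (-(((p^2*n : ℕ):ℤ) * ((b + p^h * c : ℕ):ℤ))))
      = ∑ b ∈ (range (p^h)).filter (fun b => ¬ p ∣ b),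
        ((↑(p^h * p^2):ℂ)⁻¹ * ((p:ℂ) * gaussSumS (p^h) b))^d * eZ (p^h) (-((n:ℤ) * b)) := by
    intro c _
    refine Finset.sum_congr rfl fun b hb => ?_
    obtain ⟨hbr, hbd⟩ := Finset.mem_filter.mp hb
    have hbc : ¬ p ∣ (b + p^h * c) := by
      intro hd
      refine hbd ?_
      have hpM : p ∣ p^h * c := (dvd_pow_self p (by omega)).mul_right c
      have := Nat.dvd_sub hd hpM
      simpa using this
    have hgauss : gaussSumS (p^h * p^2) (b + p^h * c) = (p:ℂ) * gaussSumS (p^h) b := by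
      rw [show (p:ℕ)^h * p^2 = p^(h+2) by ring, gauss_step p hp hodd h _ hbc]
      congr 1
      refine gaussSumS_congr (p^h) hph0 ?_
      rw [Nat.cast_add, Nat.cast_mul, ZMod.natCast_self, zero_mul, add_zero]
    rw [hgauss]
    congr 1
    have hE : (-(((p^2*n : ℕ):ℤ) * ((b + p^h * c : ℕ):ℤ)))
        = ((p^2 : ℕ):ℤ) * (-((n:ℤ) * b)) + ((p^h * p^2 : ℕ):ℤ) * (-((n:ℤ) * c)) := by
      push_cast; ring
    rw [hE, eZ_add, eZ_eq_one _ ⟨-((n:ℤ) * c), rfl⟩, mul_one]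
    exact eZ_shift (p^h) (p^2) (pow_ne_zero _ hp0) _
  have e1 : (∑ c ∈ range (p^2), ∑ b ∈ (range (p^h)).filter (fun b => ¬ p ∣ b),
        ((↑(p^h * p^2):ℂ)⁻¹ * gaussSumS (p^h * p^2) (b + p^h * c))^d
          * eZ (p^h * p^2) (-(((p^2*n : ℕ):ℤ) * ((b + p^h * c : ℕ):ℤ))))
      = (p:ℂ)^2 * ∑ b ∈ (range (p^h)).filter (fun b => ¬ p ∣ b),
        ((↑(p^h * p^2):ℂ)⁻¹ * ((p:ℂ) * gaussSumS (p^h) b))^d * eZ (p^h) (-((n:ℤ) * b)) := by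
    rw [Finset.sum_congr rfl step1, Finset.sum_const, Finset.card_range, nsmul_eq_mul]
    push_cast
    ring
  rw [e1]
  have e2 : (∑ b ∈ (range (p^h)).filter (fun b => ¬ p ∣ b),
        ((↑(p^h * p^2):ℂ)⁻¹ * ((p:ℂ) * gaussSumS (p^h) b))^d * eZ (p^h) (-((n:ℤ) * b))) * (p:ℂ)^d
      = ∑ b ∈ (range (p^h)).filter (fun b => ¬ p ∣ b),
        ((↑(p^h : ℕ):ℂ)⁻¹ * gaussSumS (p^h) b)^d * eZ (p^h) (-((n:ℤ) * b)) := by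
    rw [Finset.sum_mul]
    refine Finset.sum_congr rfl fun b hb => ?_
    have hx : (↑(p^h * p^2 : ℕ):ℂ)⁻¹ * ((p:ℂ) * gaussSumS (p^h) b) * (p:ℂ)
        = (↑(p^h : ℕ):ℂ)⁻¹ * gaussSumS (p^h) b := by
      have hpc : (p:ℂ) ≠ 0 := by exact_mod_cast hp0
      push_cast
      field_simp
    calc ((↑(p^h * p^2 : ℕ):ℂ)⁻¹ * ((p:ℂ) * gaussSumS (p^h) b))^d * eZ (p^h) (-((n:ℤ) * b)) * (p:ℂ)^d
        = ((↑(p^h * p^2 : ℕ):ℂ)⁻¹ * ((p:ℂ) * gaussSumS (p^h) b) * (p:ℂ))^d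
            * eZ (p^h) (-((n:ℤ) * b)) := by rw [mul_pow]; ring
      _ = ((↑(p^h : ℕ):ℂ)⁻¹ * gaussSumS (p^h) b)^d * eZ (p^h) (-((n:ℤ) * b)) := by rw [hx]
  linear_combination (p:ℂ)^2 * e2

section ZModPart

variable (p : ℕ) [NeZero p]

/-- `gaussSumS p` as a function on `ZMod p`. -/
noncomputable def gz (z : ZMod p) : ℂ := gaussSumS p z.val

lemma gz_natCast (a : ℕ) : gz p ((a : ℕ) : ZMod p) = gaussSumS p a := by
  refine gaussSumS_congr p (NeZero.ne p) ?_
  rw [ZMod.natCast_zmod_val]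

lemma gz_zmod (z : ZMod p) : gz p z = ∑ x : ZMod p, ec p (z * x ^ 2) := by
  rw [gz, gaussSumS_zmod p z.val]
  refine Finset.sum_congr rfl fun x _ => ?_
  rw [ZMod.natCast_zmod_val]

lemma gz_zero_val (hp : p.Prime) : gz p 0 = p := by
  rw [show ((0 : ZMod p)) = ((0:ℕ) : ZMod p) by norm_num, gz_natCast]
  exact gaussSumS_zero_arg p (NeZero.ne p)

lemma gz_sum (hp : p.Prime) : ∑ z : ZMod p, gz p z = p := by
  haveI := Fact.mk hp
  calc ∑ z : ZMod p, gz p z = ∑ z : ZMod p, ∑ x : ZMod p, ec p (x ^ 2 * z) := by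
        refine Finset.sum_congr rfl fun z _ => ?_
        rw [gz_zmod]
        exact Finset.sum_congr rfl fun x _ => by rw [mul_comm]
    _ = ∑ x : ZMod p, ∑ z : ZMod p, ec p (x ^ 2 * z) := Finset.sum_comm
    _ = ∑ x : ZMod p, if x ^ 2 = 0 then (p:ℂ) else 0 := by
        refine Finset.sum_congr rfl fun x _ => sum_ec_mul p hp (x ^ 2)
    _ = ∑ x : ZMod p, if x = 0 then (p:ℂ) else 0 := by
        refine Finset.sum_congr rfl fun x _ => ?_
        congr 1
        simp [pow_eq_zero_iff]
    _ = (p:ℂ) := by simp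

lemma gz_mul_sq (hp : p.Prime) (z : ZMod p) (c : ZMod p) (hc : c ≠ 0) :
    gz p (z * c ^ 2) = gz p z := by
  haveI := Fact.mk hp
  rw [gz_zmod, gz_zmod]
  calc ∑ x : ZMod p, ec p (z * c ^ 2 * x ^ 2)
      = ∑ x : ZMod p, ec p (z * (c * x) ^ 2) := by
        refine Finset.sum_congr rfl fun x _ => ?_
        congr 1; ring
    _ = ∑ x : ZMod p, ec p (z * x ^ 2) := by
        have := Equiv.sum_comp (Equiv.mulLeft₀ c hc) (fun y => ec p (z * y ^ 2))
        simpa using this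

lemma gz_of_square (hp : p.Prime) {z : ZMod p} (hz : z ≠ 0) (hsq : IsSquare z) :
    gz p z = gz p 1 := by
  obtain ⟨c, rfl⟩ := hsq
  have hc : c ≠ 0 := by rintro rfl; simp at hz
  have : c * c = 1 * c ^ 2 := by ring
  rw [this, gz_mul_sq p hp 1 c hc]

lemma gz_nonsquare_const (hp : p.Prime) {z w : ZMod p} (hz : z ≠ 0) (hw : w ≠ 0)
    (hzs : ¬ IsSquare z) (hws : ¬ IsSquare w) : gz p w = gz p z := by
  haveI := Fact.mk hp
  have hs : IsSquare (z⁻¹ * w) := by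
    have hzi : z⁻¹ ≠ 0 := inv_ne_zero hz
    have h1 : quadraticChar (ZMod p) (z⁻¹ * w) = 1 := by
      rw [map_mul]
      have hqz : quadraticChar (ZMod p) z = -1 := quadraticChar_neg_one_iff_not_isSquare.mpr hzs
      have hqw : quadraticChar (ZMod p) w = -1 := quadraticChar_neg_one_iff_not_isSquare.mpr hws
      have hqzi : quadraticChar (ZMod p) z⁻¹ = -1 := by
        have hmul : quadraticChar (ZMod p) z⁻¹ * quadraticChar (ZMod p) z
            = quadraticChar (ZMod p) (z⁻¹ * z) := (map_mul _ _ _).symm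
        rw [inv_mul_cancel₀ hz, map_one] at hmul
        rw [hqz] at hmul
        omega
      rw [hqzi, hqw]
      norm_num
    exact (quadraticChar_one_iff_isSquare (by
      exact mul_ne_zero (inv_ne_zero hz) hw)).mp h1
  obtain ⟨c, hc⟩ := hs
  have hc0 : c ≠ 0 := by
    rintro rfl
    rw [mul_zero] at hc
    exact hw (by
      have : w = z * 0 := by
        have := congrArg (fun t => z * t) hc
        simpa [mul_assoc, mul_inv_cancel_left₀ hz] using this
      simpa using this)
  have hwz : w = z * c ^ 2 := by
    have := congrArg (fun t => z * t) hc
    beta_reduce at this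
    rw [← mul_assoc, mul_inv_cancel₀ hz, one_mul] at this
    rw [this]; ring
  rw [hwz, gz_mul_sq p hp z c hc0]

lemma gz_eq_char [Fact p.Prime] (hp : p.Prime) (hodd : Odd p) {z : ZMod p} (hz : z ≠ 0) :
    gz p z = ((quadraticChar (ZMod p) z : ℤ) : ℂ) * gz p 1 := by
  have hchar2 : ringChar (ZMod p) ≠ 2 := by
    rw [ZMod.ringChar_zmod_n]
    exact p_ne_two p hp hodd
  classical
  by_cases hsq : IsSquare z
  · have h1 : quadraticChar (ZMod p) z = 1 := (quadraticChar_one_iff_isSquare hz).mpr hsq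
    rw [gz_of_square p hp hz hsq, h1]
    norm_num
  · -- counting argument
    have hone : (1 : ZMod p) ≠ 0 := one_ne_zero
    -- split the full sum
    have hsplit : (p:ℂ) = gz p 0 + ∑ w ∈ univ.filter (fun w : ZMod p => w ≠ 0), gz p w := by
      rw [← gz_sum p hp]
      rw [← Finset.add_sum_erase _ _ (Finset.mem_univ (0 : ZMod p))]
      congr 1
      apply Finset.sum_congr
      · ext w; simp [Finset.mem_erase, Finset.mem_filter, and_comm]
      · intros; rfl
    rw [gz_zero_val p hp] at hsplit
    have hzero : ∑ w ∈ univ.filter (fun w : ZMod p => w ≠ 0), gz p w = 0 := by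
      linear_combination -hsplit
    -- decompose nonzero into squares and nonsquares
    have hdecomp : ∑ w ∈ univ.filter (fun w : ZMod p => w ≠ 0), gz p w
        = (univ.filter (fun w : ZMod p => w ≠ 0 ∧ IsSquare w)).card * gz p 1
          + (univ.filter (fun w : ZMod p => w ≠ 0 ∧ ¬ IsSquare w)).card * gz p z := by
      rw [← Finset.sum_filter_add_sum_filter_not (univ.filter (fun w : ZMod p => w ≠ 0))
        (fun w => IsSquare w) (gz p)]
      congr 1
      · rw [Finset.filter_filter, Finset.sum_congr rfl
          (fun w hw => gz_of_square p hp (Finset.mem_filter.mp hw).2.1 (Finset.mem_filter.mp hw).2.2),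
          Finset.sum_const, nsmul_eq_mul]
      · rw [Finset.filter_filter, Finset.sum_congr rfl
          (fun w hw => gz_nonsquare_const p hp hz (Finset.mem_filter.mp hw).2.1 hsq
            (Finset.mem_filter.mp hw).2.2),
          Finset.sum_const, nsmul_eq_mul]
    -- the two cardinalities agree
    have hcard : (univ.filter (fun w : ZMod p => w ≠ 0 ∧ IsSquare w)).card
        = (univ.filter (fun w : ZMod p => w ≠ 0 ∧ ¬ IsSquare w)).card := by
      have hqsum := quadraticChar_sum_zero hchar2
      have hval : ∀ w : ZMod p, quadraticChar (ZMod p) w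
          = (if w ≠ 0 ∧ IsSquare w then 1 else 0) - (if w ≠ 0 ∧ ¬ IsSquare w then 1 else 0) := by
        intro w
        by_cases hw : w = 0
        · subst hw; simp
        · by_cases hws : IsSquare w
          · rw [(quadraticChar_one_iff_isSquare hw).mpr hws]
            simp [hw, hws]
          · rw [quadraticChar_neg_one_iff_not_isSquare.mpr hws]
            simp [hw, hws]
      rw [Finset.sum_congr rfl (fun w _ => hval w), Finset.sum_sub_distrib,
        Finset.sum_boole, Finset.sum_boole] at hqsum
      have := sub_eq_zero.mp hqsum
      exact_mod_cast this
    -- conclude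
    have hq : quadraticChar (ZMod p) z = -1 := quadraticChar_neg_one_iff_not_isSquare.mpr hsq
    rw [hq]
    have hmem : z ∈ univ.filter (fun w : ZMod p => w ≠ 0 ∧ ¬ IsSquare w) := by
      simp [hz, hsq]
    have hcpos : 0 < (univ.filter (fun w : ZMod p => w ≠ 0 ∧ ¬ IsSquare w)).card :=
      Finset.card_pos.mpr ⟨z, hmem⟩
    have hC : ((univ.filter (fun w : ZMod p => w ≠ 0 ∧ ¬ IsSquare w)).card : ℂ) ≠ 0 := by
      exact_mod_cast hcpos.ne'
    rw [hdecomp, hcard] at hzero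
    have hfac : ((univ.filter (fun w : ZMod p => w ≠ 0 ∧ ¬ IsSquare w)).card : ℂ)
        * (gz p 1 + gz p z) = 0 := by linear_combination hzero
    have := (mul_eq_zero.mp hfac).resolve_left hC
    have hgz : gz p z = - gz p 1 := by linear_combination this
    rw [hgz]
    norm_num

lemma sum_gz_pow [Fact p.Prime] (hp : p.Prime) (hodd : Odd p) (d : ℕ) (hd : 1 ≤ d) :
    ∑ z ∈ univ.filter (fun z : ZMod p => z ≠ 0), (gz p z) ^ d
      = (if Even d then ((p:ℂ) - 1) else 0) * (gz p 1) ^ d := by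
  classical
  have hchar2 : ringChar (ZMod p) ≠ 2 := by
    rw [ZMod.ringChar_zmod_n]; exact p_ne_two p hp hodd
  have hstep : ∀ z ∈ univ.filter (fun z : ZMod p => z ≠ 0),
      (gz p z) ^ d = ((quadraticChar (ZMod p) z : ℤ) : ℂ) ^ d * (gz p 1) ^ d := by
    intro z hzmem
    have hz : z ≠ 0 := (Finset.mem_filter.mp hzmem).2
    rw [gz_eq_char p hp hodd hz, mul_pow]
  rw [Finset.sum_congr rfl hstep, ← Finset.sum_mul]
  congr 1
  have hchi : ∑ z ∈ univ.filter (fun z : ZMod p => z ≠ 0),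
      ((quadraticChar (ZMod p) z : ℤ) : ℂ) ^ d
      = (((∑ z ∈ univ.filter (fun z : ZMod p => z ≠ 0),
          (quadraticChar (ZMod p) z) ^ d : ℤ)) : ℂ) := by push_cast; rfl
  rw [hchi]
  by_cases hev : Even d
  · have h1 : ∀ z ∈ univ.filter (fun z : ZMod p => z ≠ 0),
        (quadraticChar (ZMod p) z) ^ d = 1 := by
      intro z hzmem
      have hz : z ≠ 0 := (Finset.mem_filter.mp hzmem).2
      rcases quadraticChar_dichotomy hz with h | h <;> rw [h]
      · exact one_pow d
      · exact hev.neg_one_pow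
    have hcard : (univ.filter (fun z : ZMod p => z ≠ 0)).card = p - 1 := by
      rw [Finset.filter_ne' univ 0, Finset.card_erase_of_mem (Finset.mem_univ 0),
        Finset.card_univ, ZMod.card]
    have hsub : ((p - 1 : ℕ) : ℤ) = (p:ℤ) - 1 := by
      have := hp.pos; omega
    rw [Finset.sum_congr rfl h1, Finset.sum_const, if_pos hev, hcard, nsmul_eq_mul, mul_one, hsub]
    push_cast
    ring
  · have h1 : ∀ z ∈ univ.filter (fun z : ZMod p => z ≠ 0),
        (quadraticChar (ZMod p) z) ^ d = quadraticChar (ZMod p) z := by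
      intro z hzmem
      have hz : z ≠ 0 := (Finset.mem_filter.mp hzmem).2
      rcases quadraticChar_dichotomy hz with h | h <;> rw [h]
      · exact one_pow d
      · exact (Nat.not_even_iff_odd.mp hev).neg_one_pow
    rw [Finset.sum_congr rfl h1, if_neg hev]
    have h2 : ∑ z ∈ univ.filter (fun z : ZMod p => z ≠ 0), quadraticChar (ZMod p) z
        = ∑ z : ZMod p, quadraticChar (ZMod p) z := by
      refine Finset.sum_subset (Finset.filter_subset _ _) ?_
      intro z _ hz
      have hz0 : z = 0 := by
        by_contra hne
        exact hz (Finset.mem_filter.mpr ⟨Finset.mem_univ z, hne⟩)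
      rw [hz0, quadraticChar_zero]
    rw [h2, quadraticChar_sum_zero hchar2]
    norm_num

lemma gz_one_sq [Fact p.Prime] (hp : p.Prime) (hodd : Odd p) :
    gz p 1 ^ 2 = (p:ℂ) ∨ gz p 1 ^ 2 = -(p:ℂ) := by
  classical
  have hp0 : p ≠ 0 := hp.pos.ne'
  -- |g|² = p
  have hnorm : gz p 1 * (starRingEnd ℂ) (gz p 1) = (p:ℂ) := by
    have hg : gz p 1 = ∑ x : ZMod p, ec p (x ^ 2) := by
      rw [gz_zmod]
      exact Finset.sum_congr rfl fun x _ => by rw [one_mul]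
    have hgc : (starRingEnd ℂ) (gz p 1) = ∑ y : ZMod p, ec p (-(y ^ 2)) := by
      rw [hg, map_sum]
      exact Finset.sum_congr rfl fun y _ => conj_ec p hp0 _
    rw [hgc, hg, Finset.sum_mul_sum]
    have hterm : ∀ x y : ZMod p, ec p (x ^ 2) * ec p (-(y ^ 2)) = ec p (x ^ 2 - y ^ 2) := by
      intro x y
      rw [← ec_add p hp0]
      congr 1
      ring
    calc ∑ x : ZMod p, ∑ y : ZMod p, ec p (x ^ 2) * ec p (-(y ^ 2))
        = ∑ x : ZMod p, ∑ y : ZMod p, ec p (x ^ 2 - y ^ 2) := by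
          exact Finset.sum_congr rfl fun x _ => Finset.sum_congr rfl fun y _ => hterm x y
      _ = ∑ y : ZMod p, ∑ x : ZMod p, ec p (x ^ 2 - y ^ 2) := Finset.sum_comm
      _ = ∑ y : ZMod p, ∑ v : ZMod p, ec p ((y + v) ^ 2 - y ^ 2) := by
          refine Finset.sum_congr rfl fun y _ => ?_
          have := Equiv.sum_comp (Equiv.addLeft y) (fun x => ec p (x ^ 2 - y ^ 2))
          simpa using this.symm
      _ = ∑ y : ZMod p, ∑ v : ZMod p, ec p (v ^ 2) * ec p ((2 * v) * y) := by
          refine Finset.sum_congr rfl fun y _ => Finset.sum_congr rfl fun v _ => ?_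
          rw [← ec_add p hp0]
          congr 1
          ring
      _ = ∑ v : ZMod p, ∑ y : ZMod p, ec p (v ^ 2) * ec p ((2 * v) * y) := Finset.sum_comm
      _ = ∑ v : ZMod p, ec p (v ^ 2) * (if (2 * v : ZMod p) = 0 then (p:ℂ) else 0) := by
          refine Finset.sum_congr rfl fun v _ => ?_
          rw [← Finset.mul_sum, sum_ec_mul p hp (2 * v)]
      _ = (p:ℂ) := by
          have h2 : (2 : ZMod p) ≠ 0 := by
            intro h
            have := (ZMod.natCast_eq_zero_iff 2 p).mp (by exact_mod_cast h)
            exact (p_ne_two p hp hodd) ((Nat.prime_dvd_prime_iff_eq hp Nat.prime_two).mp this)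
          have hiff : ∀ v : ZMod p, (2 * v : ZMod p) = 0 ↔ v = 0 := by
            intro v
            constructor
            · intro h
              rcases mul_eq_zero.mp h with h | h
              · exact absurd h h2
              · exact h
            · rintro rfl; ring
          calc ∑ v : ZMod p, ec p (v ^ 2) * (if (2 * v : ZMod p) = 0 then (p:ℂ) else 0)
              = ∑ v : ZMod p, if v = 0 then ec p (v ^ 2) * (p:ℂ) else 0 := by
                refine Finset.sum_congr rfl fun v _ => ?_
                by_cases hv : v = 0
                · subst hv
                  simp
                · have hv2 : (2 * v : ZMod p) ≠ 0 := fun h => hv ((hiff v).mp h)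
                  simp [hv, hv2]
            _ = ec p ((0 : ZMod p) ^ 2) * (p:ℂ) := by rw [Finset.sum_ite_eq' univ 0]; simp
            _ = (p:ℂ) := by
                rw [show ((0:ZMod p) ^ 2) = 0 by ring, ec_zero p hp0, one_mul]
  -- conj g = ± g
  have hconj : (starRingEnd ℂ) (gz p 1) = gz p (-1) := by
    have hg : gz p 1 = ∑ x : ZMod p, ec p (x ^ 2) := by
      rw [gz_zmod]
      exact Finset.sum_congr rfl fun x _ => by rw [one_mul]
    rw [hg, map_sum, gz_zmod]
    refine Finset.sum_congr rfl fun x _ => ?_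
    rw [conj_ec p hp0]
    congr 1
    ring
  have hne : (-1 : ZMod p) ≠ 0 := by
    intro h
    have : (1 : ZMod p) = 0 := by linear_combination -h
    exact one_ne_zero this
  have hd := gz_eq_char p hp hodd hne
  rcases quadraticChar_dichotomy hne with hq | hq <;> rw [hq] at hd
  · left
    have : (starRingEnd ℂ) (gz p 1) = gz p 1 := by rw [hconj, hd]; norm_num
    rw [← hnorm, this]
    ring
  · right
    have : (starRingEnd ℂ) (gz p 1) = -gz p 1 := by rw [hconj, hd]; norm_num
    rw [← hnorm, this]
    ring

end ZModPart

lemma Acoef_p_mul (d p m : ℕ) [NeZero p] [Fact p.Prime] (hp : p.Prime) (hodd : Odd p)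
    (hd : 1 ≤ d) (hm : p ∣ m) :
    Acoef d p m * (p:ℂ)^d = (if Even d then ((p:ℂ) - 1) else 0) * (gz p 1)^d := by
  classical
  have hp0 : p ≠ 0 := hp.pos.ne'
  have hcop : ∀ a : ℕ, Nat.gcd a p = 1 ↔ ¬ p ∣ a := by
    intro a
    have := gcd_pow_iff p hp 1 le_rfl a
    rwa [pow_one] at this
  rw [Acoef_range d p m hp.two_le, Finset.sum_mul]
  have hbij : ∑ a ∈ (range p).filter (fun a => Nat.gcd a p = 1),
      ((((p:ℕ):ℂ)⁻¹ * gaussSumS p a)^d * eZ p (-((m:ℤ) * a))) * (p:ℂ)^d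
      = ∑ z ∈ univ.filter (fun z : ZMod p => z ≠ 0), (gz p z)^d := by
    refine Finset.sum_nbij' (fun a => ((a:ℕ) : ZMod p)) (fun z => z.val) ?_ ?_ ?_ ?_ ?_
    · intro a ha
      obtain ⟨har, hag⟩ := Finset.mem_filter.mp ha
      refine Finset.mem_filter.mpr ⟨Finset.mem_univ _, ?_⟩
      intro h0
      exact ((hcop a).mp hag) ((ZMod.natCast_eq_zero_iff a p).mp h0)
    · intro z hz
      have hz0 : z ≠ 0 := (Finset.mem_filter.mp hz).2
      refine Finset.mem_filter.mpr ⟨Finset.mem_range.mpr (ZMod.val_lt z), (hcop _).mpr ?_⟩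
      intro hd2
      refine hz0 ?_
      rw [← ZMod.natCast_zmod_val z]
      exact (ZMod.natCast_eq_zero_iff _ p).mpr hd2
    · intro a ha
      exact ZMod.val_cast_of_lt (Finset.mem_range.mp (Finset.mem_filter.mp ha).1)
    · intro z _
      exact ZMod.natCast_zmod_val z
    · intro a ha
      have he1 : eZ p (-((m:ℤ) * a)) = 1 := by
        obtain ⟨e, rfl⟩ := hm
        exact eZ_eq_one p ⟨-(e * a), by push_cast; ring⟩
      rw [he1, mul_one, ← mul_pow, gz_natCast]
      congr 1
      have hpc : ((p:ℕ):ℂ) ≠ 0 := by exact_mod_cast hp0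
      field_simp
  rw [hbij, sum_gz_pow p hp hodd d hd]

lemma Acoef_p2_mul (d p n : ℕ) (hp : p.Prime) (hodd : Odd p) (hd : 1 ≤ d) :
    Acoef d (p^2) (p^2 * n) * (p:ℂ)^d = (p:ℂ)^2 - (p:ℂ) := by
  have hp0 : p ≠ 0 := hp.pos.ne'
  have hpc : ((p:ℕ):ℂ) ≠ 0 := by exact_mod_cast hp0
  rw [Acoef_pow d p (p^2*n) 2 hp (by omega), Finset.sum_mul]
  have hterm : ∀ a ∈ (range (p^2)).filter (fun a => ¬ p ∣ a),
      ((((p^2 : ℕ)):ℂ)⁻¹ * gaussSumS (p^2) a)^d * eZ (p^2) (-((((p^2*n : ℕ)):ℤ) * a)) * (p:ℂ)^d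
        = 1 := by
    intro a ha
    obtain ⟨har, had⟩ := Finset.mem_filter.mp ha
    have he1 : eZ (p^2) (-((((p^2*n : ℕ)):ℤ) * a)) = 1 :=
      eZ_eq_one _ ⟨-((n:ℤ) * a), by push_cast; ring⟩
    have hg : gaussSumS (p^2) a = (p:ℂ) := by
      have := gauss_eval_even p hp hodd 1 a had
      rw [show (2 * 1 : ℕ) = 2 by norm_num] at this
      rw [this, pow_one]
    rw [he1, mul_one, hg, ← mul_pow]
    have : (((p^2 : ℕ)):ℂ)⁻¹ * (p:ℂ) * (p:ℂ) = 1 := by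
      push_cast
      field_simp
    rw [this, one_pow]
  rw [Finset.sum_congr rfl hterm, Finset.sum_const, nsmul_eq_mul, mul_one]
  have hset : (range (p^2)).filter (fun a => ¬ p ∣ a)
      = (range (p^2)).filter ((p^2).Coprime) := by
    apply Finset.filter_congr
    intro a _
    rw [Nat.coprime_comm]
    exact (gcd_pow_iff p hp 2 (by omega) a).symm
  rw [hset]
  have hcard : ((range (p^2)).filter ((p^2).Coprime)).card = (p^2).totient :=
    (Nat.totient_eq_card_coprime (p^2)).symm
  rw [hcard, Nat.totient_prime_pow hp (by omega : 0 < 2)]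
  rw [Nat.cast_mul, show (2 - 1 : ℕ) = 1 by norm_num, pow_one,
    Nat.cast_sub hp.pos, Nat.cast_one]
  ring

lemma localDensity_eq (p d n : ℕ) [Fact p.Prime] (hp : p.Prime) (hodd : Odd p) (hn : n ≠ 0) :
    localDensity p d n = ∑ h ∈ range (padicValNat p n + 2), Acoef d (p^h) n := by
  rw [localDensity]
  refine tsum_eq_sum ?_
  intro h hh
  have hge : padicValNat p n + 2 ≤ h := by
    by_contra hlt
    exact hh (Finset.mem_range.mpr (by omega))
  exact Acoef_vanish d p n h hp hodd hn (by omega) hge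

lemma Acoef_scale' (d p n h : ℕ) (hp : p.Prime) (hodd : Odd p) (hh : 1 ≤ h) (hd : 2 ≤ d) :
    (p:ℂ)^(d-2) * Acoef d (p^(h+2)) (p^2 * n) = Acoef d (p^h) n := by
  have hp0 : (p:ℂ) ≠ 0 := by exact_mod_cast hp.pos.ne'
  have key := Acoef_scale d p n h hp hodd hh
  have hpow : (p:ℂ)^2 * (p:ℂ)^(d-2) = (p:ℂ)^d := by
    rw [← pow_add]
    congr 1
    omega
  have hmain : ((p:ℂ)^(d-2) * Acoef d (p^(h+2)) (p^2*n)) * (p:ℂ)^d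
      = Acoef d (p^h) n * (p:ℂ)^d := by
    calc ((p:ℂ)^(d-2) * Acoef d (p^(h+2)) (p^2*n)) * (p:ℂ)^d
        = (Acoef d (p^(h+2)) (p^2*n) * (p:ℂ)^d) * (p:ℂ)^(d-2) := by ring
      _ = (Acoef d (p^h) n * (p:ℂ)^2) * (p:ℂ)^(d-2) := by rw [key]
      _ = Acoef d (p^h) n * ((p:ℂ)^2 * (p:ℂ)^(d-2)) := by ring
      _ = Acoef d (p^h) n * (p:ℂ)^d := by rw [hpow]
  exact mul_right_cancel₀ (pow_ne_zero d hp0) hmain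

end LDAux


/-- For `d ≥ 3` and `p` an odd prime, `p^{d-2} δ_{p,d}(p²n) - δ_{p,d}(n)` is a real
number bounded below by a positive constant uniformly in `n ≥ 1`. -/
theorem localDensity_difference_lower_bound (d p : ℕ) (hd : 3 ≤ d)
    (hp : p.Prime) (hpodd : Odd p) :
    ∃ C₀ : ℝ, 0 < C₀ ∧ ∀ n : ℕ, 1 ≤ n →
      ((p : ℂ) ^ (d - 2) * localDensity p d (p ^ 2 * n) - localDensity p d n).im = 0 ∧
      C₀ ≤ ((p : ℂ) ^ (d - 2) * localDensity p d (p ^ 2 * n) - localDensity p d n).re := by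
  haveI : Fact p.Prime := ⟨hp⟩
  haveI : NeZero p := ⟨hp.pos.ne'⟩
  have hp0 : p ≠ 0 := hp.pos.ne'
  have hpc : (p:ℂ) ≠ 0 := by exact_mod_cast hp0
  have hpr : (0:ℝ) < (p:ℝ) := by exact_mod_cast hp.pos
  have hp3 : 3 ≤ p := by
    have h2 := LDAux.p_ne_two p hp hpodd
    have := hp.two_le
    omega
  have hp3r : (3:ℝ) ≤ (p:ℝ) := by exact_mod_cast hp3
  have hpdR : (0:ℝ) < (p:ℝ)^d := pow_pos hpr d
  have hpdC : (p:ℂ)^d ≠ 0 := pow_ne_zero _ hpc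
  -- the sign of the Gauss sum square
  obtain ⟨ε, hεabs, hgε⟩ : ∃ ε : ℝ, |ε| = 1 ∧ (LDAux.gz p 1)^2 = (ε:ℂ) * p := by
    rcases LDAux.gz_one_sq p hp hpodd with hg | hg
    · exact ⟨1, by norm_num, by rw [hg]; norm_num⟩
    · exact ⟨-1, by norm_num, by rw [hg]; push_cast; ring⟩
  -- define the real values of the two boundary coefficients
  set t : ℝ := if Even d then ((p:ℝ)-1) * ε^(d/2) * (p:ℝ)^(d/2) / (p:ℝ)^d else 0 with htdef
  set u : ℝ := ((p:ℝ)^2 - (p:ℝ)) / (p:ℝ)^d with hudef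
  have hu0 : 0 ≤ u := by
    apply div_nonneg _ hpdR.le
    nlinarith
  have htlb : -(1/3 : ℝ) ≤ t := by
    rw [htdef]
    split_ifs with hev
    · obtain ⟨e, hde⟩ := hev
      have hdee : d = 2 * e := by omega
      have he2 : 2 ≤ e := by omega
      have hd2 : d / 2 = e := by omega
      rw [hd2]
      have hpe1 : (0:ℝ) < (p:ℝ)^e := pow_pos hpr e
      have hcore : ((p:ℝ)-1) * (p:ℝ)^e / (p:ℝ)^d ≤ 1/3 := by
        rw [div_le_iff₀ hpdR]
        have hpd_split : (p:ℝ)^d = (p:ℝ)^e * (p:ℝ)^e := by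
          rw [hde, pow_add]
        have hpe : (p:ℝ)^2 ≤ (p:ℝ)^e := pow_le_pow_right₀ (by linarith) he2
        rw [hpd_split]
        nlinarith
      have hcore0 : 0 ≤ ((p:ℝ)-1) * (p:ℝ)^e / (p:ℝ)^d :=
        div_nonneg (mul_nonneg (by linarith) hpe1.le) hpdR.le
      rcases (abs_eq (by norm_num : (0:ℝ) ≤ 1)).mp hεabs with hε1 | hε1
      · rw [hε1, one_pow, mul_one]
        linarith
      · rw [hε1]
        rcases Nat.even_or_odd e with hee | hee
        · rw [hee.neg_one_pow, mul_one]
          linarith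
        · rw [hee.neg_one_pow]
          have hneg : ((p:ℝ)-1) * (-1) * (p:ℝ)^e / (p:ℝ)^d
              = -(((p:ℝ)-1) * (p:ℝ)^e / (p:ℝ)^d) := by ring
          rw [hneg]
          linarith
    · norm_num
  -- main constant
  refine ⟨1, by norm_num, ?_⟩
  intro n hn
  have hn0 : n ≠ 0 := by omega
  set v := padicValNat p n with hv
  have hδn : localDensity p d n = ∑ h ∈ range (v+2), Acoef d (p^h) n :=
    LDAux.localDensity_eq p d n hp hpodd hn0
  have hM0 : p^2*n ≠ 0 := by positivity
  have hval : padicValNat p (p^2*n) = v + 2 := by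
    rw [padicValNat.mul (pow_ne_zero 2 hp0) hn0, padicValNat.prime_pow]
    omega
  have hδ2 : localDensity p d (p^2*n) = ∑ h ∈ range (v+4), Acoef d (p^h) (p^2*n) := by
    rw [LDAux.localDensity_eq p d (p^2*n) hp hpodd hM0, hval,
      show v + 2 + 2 = v + 4 by omega]
  have hsplit2 : ∑ h ∈ range (v+4), Acoef d (p^h) (p^2*n)
      = (∑ h ∈ range 3, Acoef d (p^h) (p^2*n)) + ∑ j ∈ range (v+1), Acoef d (p^(3+j)) (p^2*n) := by
    rw [show v+4 = 3 + (v+1) by omega]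
    exact Finset.sum_range_add _ 3 (v+1)
  have hsplitn : ∑ h ∈ range (v+2), Acoef d (p^h) n
      = Acoef d (p^0) n + ∑ j ∈ range (v+1), Acoef d (p^(1+j)) n := by
    rw [show v+2 = 1 + (v+1) by omega, Finset.sum_range_add, Finset.sum_range_one]
  have hscale : ∀ j, (p:ℂ)^(d-2) * Acoef d (p^(3+j)) (p^2*n) = Acoef d (p^(1+j)) n := by
    intro j
    have := LDAux.Acoef_scale' d p n (1+j) hp hpodd (by omega) (by omega)
    rwa [show (1+j)+2 = 3+j by omega] at this
  have h0 : Acoef d (p^0) (p^2*n) = 1 := by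
    rw [pow_zero]; exact LDAux.Acoef_one_mod d _
  have h0n : Acoef d (p^0) n = 1 := by
    rw [pow_zero]; exact LDAux.Acoef_one_mod d n
  have hsum3 : ∑ h ∈ range 3, Acoef d (p^h) (p^2*n)
      = 1 + Acoef d (p^1) (p^2*n) + Acoef d (p^2) (p^2*n) := by
    rw [Finset.sum_range_succ, Finset.sum_range_succ, Finset.sum_range_one, h0]
  have hD : (p:ℂ)^(d-2) * localDensity p d (p^2*n) - localDensity p d n
      = (p:ℂ)^(d-2) * (1 + Acoef d (p^1) (p^2*n) + Acoef d (p^2) (p^2*n)) - 1 := by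
    rw [hδ2, hδn, hsplit2, hsplitn, hsum3, h0n, mul_add, Finset.mul_sum,
      Finset.sum_congr rfl (fun j _ => hscale j)]
    ring
  -- values of the two boundary coefficients
  have hA1m := LDAux.Acoef_p_mul d p (p^2*n) hp hpodd (by omega)
    (dvd_mul_of_dvd_left (dvd_pow_self p (by norm_num)) n)
  have hA2m := LDAux.Acoef_p2_mul d p n hp hpodd (by omega)
  have hA1 : Acoef d (p^1) (p^2*n) = ((t:ℝ):ℂ) := by
    rw [pow_one]
    refine mul_right_cancel₀ hpdC ?_
    rw [hA1m, htdef]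
    by_cases hev : Even d
    · obtain ⟨e, hde⟩ := hev
      have hdee : d = 2 * e := by omega
      have hd2 : d / 2 = e := by omega
      rw [if_pos ⟨e, hde⟩, if_pos ⟨e, hde⟩, hd2]
      have hgd : (LDAux.gz p 1)^d = ((ε:ℝ):ℂ)^e * (p:ℂ)^e := by
        rw [hdee, pow_mul, hgε, mul_pow]
      rw [hgd]
      push_cast
      field_simp
    · rw [if_neg hev, if_neg hev]
      push_cast
      ring
  have hA2 : Acoef d (p^2) (p^2*n) = ((u:ℝ):ℂ) := by
    refine mul_right_cancel₀ hpdC ?_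
    rw [hA2m, hudef]
    push_cast
    field_simp
  have hfinal : (p:ℂ)^(d-2) * localDensity p d (p^2*n) - localDensity p d n
      = ((((p:ℝ)^(d-2) * (1 + t + u) - 1 : ℝ)) : ℂ) := by
    rw [hD, hA1, hA2]
    push_cast
    ring
  rw [hfinal]
  constructor
  · exact Complex.ofReal_im _
  · rw [Complex.ofReal_re]
    have hPd : (3:ℝ) ≤ (p:ℝ)^(d-2) := by
      calc (3:ℝ) ≤ (p:ℝ) := hp3r
        _ = (p:ℝ)^1 := (pow_one _).symm
        _ ≤ (p:ℝ)^(d-2) := pow_le_pow_right₀ (by linarith) (by omega)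
    have hs : (2/3 : ℝ) ≤ 1 + t + u := by linarith
    have hmul : (p:ℝ)^(d-2) * (2/3) ≤ (p:ℝ)^(d-2) * (1 + t + u) :=
      mul_le_mul_of_nonneg_left hs (by linarith)
    linarith
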